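/- In the MED setting, each rejection region R_i = {(x₁,…,x_k,y) : min_{i≤j≤k} L_{S,j}(x_j,y) > δ} has level α for H₀ᵢ: for any (p₁,…,p_k,p₀) with min_{j≥i}(p_j−p₀) ≤ δ, P(R_i) ≤ α. -/
import Mathlib


open Finset
open scoped Classical

noncomputable section

/-- Binomial probability mass function `P(X = x)` for `X ~ Bin(n, p)`. -/
def binomPMF (n : ℕ) (p : ℝ) (x : ℕ) : ℝ :=
  (n.choose x : ℝ) * p ^ x * (1 - p) ^ (n - x)

/-- Probability of a set `T` of sample points under independent `X ~ Bin(n,p₁)`, `Y ~ Bin(m,p₀)`. -/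
def prob (n m : ℕ) (p₁ p₀ : ℝ) (T : Finset (ℕ × ℕ)) : ℝ :=
  ∑ z ∈ T, binomPMF n p₁ z.1 * binomPMF m p₀ z.2

/-- The sample space `S = {(x,y) : 0 ≤ x ≤ n, 0 ≤ y ≤ m}`. -/
def sampleSpace (n m : ℕ) : Finset (ℕ × ℕ) :=
  Finset.range (n + 1) ×ˢ Finset.range (m + 1)

/-- The joint sample space for independent `X_i ~ Bin(n_i, p_i)`, `i = 1,…,k`, and
`Y ~ Bin(m, p₀)`. -/
def jointSpace (k : ℕ) (n : Fin k → ℕ) (m : ℕ) : Finset ((Fin k → ℕ) × ℕ) :=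
  (Fintype.piFinset fun i => Finset.range (n i + 1)) ×ˢ Finset.range (m + 1)

/-- Joint probability of a set `T` under independent `X_i ~ Bin(n_i, p_i)` and
`Y ~ Bin(m, p₀)`. -/
def jointProb (k : ℕ) (n : Fin k → ℕ) (m : ℕ) (p : Fin k → ℝ) (p₀ : ℝ)
    (T : Finset ((Fin k → ℕ) × ℕ)) : ℝ :=
  ∑ w ∈ T, (∏ i, binomPMF (n i) (p i) (w.1 i)) * binomPMF m p₀ w.2

lemma binomPMF_nonneg {n : ℕ} {p : ℝ} (h0 : 0 ≤ p) (h1 : p ≤ 1) (x : ℕ) :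
    0 ≤ binomPMF n p x := by
  have : (0:ℝ) ≤ 1 - p := by linarith
  unfold binomPMF; positivity

lemma sum_binomPMF (n : ℕ) (p : ℝ) : ∑ x ∈ Finset.range (n+1), binomPMF n p x = 1 := by
  have h : ((p + (1-p)) : ℝ) ^ n = 1 := by norm_num
  rw [add_pow] at h
  rw [← h]
  refine Finset.sum_congr rfl fun x hx => ?_
  unfold binomPMF; ring

lemma marg (k : ℕ) (n : Fin k → ℕ) (m : ℕ) (p : Fin k → ℝ) (p₀ : ℝ) (j₀ : Fin k)
    (Q : ℕ × ℕ → Prop) :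
    jointProb k n m p p₀ ((jointSpace k n m).filter (fun w => Q (w.1 j₀, w.2)))
      = prob (n j₀) m (p j₀) p₀ ((sampleSpace (n j₀) m).filter Q) := by
  unfold jointProb prob jointSpace sampleSpace
  rw [Finset.sum_filter, Finset.sum_filter, Finset.sum_product, Finset.sum_product]
  rw [show (∑ x ∈ Fintype.piFinset fun i => Finset.range (n i + 1), ∑ y ∈ Finset.range (m+1),
      (if Q (x j₀, y) then (∏ i, binomPMF (n i) (p i) (x i)) * binomPMF m p₀ y else 0))
    = ∑ y ∈ Finset.range (m+1), ∑ x ∈ Fintype.piFinset fun i => Finset.range (n i + 1),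
      (if Q (x j₀, y) then (∏ i, binomPMF (n i) (p i) (x i)) * binomPMF m p₀ y else 0)
    from Finset.sum_comm,
    show (∑ v ∈ Finset.range (n j₀ + 1), ∑ y ∈ Finset.range (m+1),
      (if Q (v, y) then binomPMF (n j₀) (p j₀) v * binomPMF m p₀ y else 0))
    = ∑ y ∈ Finset.range (m+1), ∑ v ∈ Finset.range (n j₀ + 1),
      (if Q (v, y) then binomPMF (n j₀) (p j₀) v * binomPMF m p₀ y else 0)
    from Finset.sum_comm]
  refine Finset.sum_congr rfl fun y hy => ?_
  set f : Fin k → ℕ → ℝ := fun i v =>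
    if i = j₀ then (if Q (v, y) then binomPMF (n i) (p i) v * binomPMF m p₀ y else 0)
    else binomPMF (n i) (p i) v with hf
  have step1 : ∀ x : Fin k → ℕ,
      (if Q (x j₀, y) then (∏ i, binomPMF (n i) (p i) (x i)) * binomPMF m p₀ y else 0)
        = ∏ i, f i (x i) := by
    intro x
    rw [← Finset.mul_prod_erase Finset.univ (fun i => f i (x i)) (Finset.mem_univ j₀),
      ← Finset.mul_prod_erase Finset.univ (fun i => binomPMF (n i) (p i) (x i))
        (Finset.mem_univ j₀)]
    have he : ∏ i ∈ Finset.univ.erase j₀, f i (x i)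
        = ∏ i ∈ Finset.univ.erase j₀, binomPMF (n i) (p i) (x i) := by
      refine Finset.prod_congr rfl fun i hi => ?_
      simp [hf, Finset.mem_erase.mp hi |>.1]
    rw [he]
    simp only [hf, if_pos rfl]
    split_ifs <;> ring
  rw [Finset.sum_congr rfl fun x _ => step1 x, ← Finset.prod_univ_sum]
  rw [Finset.prod_eq_single j₀ (fun i _ hi => by
    simp only [hf, if_neg hi]; exact sum_binomPMF (n i) (p i)) (by simp)]
  simp [hf]

lemma prob_sampleSpace (n m : ℕ) (p₁ p₀ : ℝ) :
    prob n m p₁ p₀ (sampleSpace n m) = 1 := by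
  unfold prob sampleSpace
  rw [Finset.sum_product]
  rw [← Finset.sum_mul_sum, sum_binomPMF, sum_binomPMF, mul_one]

lemma prob_mono {n m : ℕ} {p₁ p₀ : ℝ} (h0 : 0 ≤ p₁) (h1 : p₁ ≤ 1) (h0' : 0 ≤ p₀)
    (h1' : p₀ ≤ 1) {S T : Finset (ℕ × ℕ)} (h : S ⊆ T) :
    prob n m p₁ p₀ S ≤ prob n m p₁ p₀ T :=
  Finset.sum_le_sum_of_subset_of_nonneg h fun z _ _ =>
    mul_nonneg (binomPMF_nonneg h0 h1 _) (binomPMF_nonneg h0' h1' _)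

/-- **Theorem 3, level part.** Each rejection region
`R_i = {(x₁,…,x_k,y) : min_{i ≤ j ≤ k} L_{S,j}(x_j, y) > δ}` has level `α` for
`H₀ᵢ : min_{j ≥ i}(p_j - p₀) ≤ δ`. -/
theorem MED_rejection_level_alpha
    (k : ℕ) (n : Fin k → ℕ) (m : ℕ) (α δ : ℝ) (hα : 0 ≤ α ∧ α < 1) (hδ : 0 ≤ δ)
    (LS : Fin k → ℕ × ℕ → ℝ)
    (hcov : ∀ j : Fin k, ∀ p ∈ Set.Icc (0 : ℝ) 1, ∀ p₀ ∈ Set.Icc (0 : ℝ) 1,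
      1 - α ≤ prob (n j) m p p₀
        ((sampleSpace (n j) m).filter (fun z => LS j z ≤ p - p₀)))
    (i : Fin k) :
    ∀ (p : Fin k → ℝ) (p₀ : ℝ), (∀ j, p j ∈ Set.Icc (0 : ℝ) 1) → p₀ ∈ Set.Icc (0 : ℝ) 1 →
      (∃ j : Fin k, i ≤ j ∧ p j - p₀ ≤ δ) →
      jointProb k n m p p₀
        ((jointSpace k n m).filter (fun w => ∀ j : Fin k, i ≤ j → δ < LS j (w.1 j, w.2)))
        ≤ α := by
  rintro p p₀ hp hp0 ⟨j₀, hij, hle⟩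
  obtain ⟨hp0l, hp0r⟩ := hp0
  obtain ⟨hpl, hpr⟩ := hp j₀
  -- Step 1: shrink the event to one depending only on coordinate j₀
  have h1 : jointProb k n m p p₀
      ((jointSpace k n m).filter (fun w => ∀ j : Fin k, i ≤ j → δ < LS j (w.1 j, w.2)))
      ≤ jointProb k n m p p₀
      ((jointSpace k n m).filter (fun w => δ < LS j₀ (w.1 j₀, w.2))) := by
    refine Finset.sum_le_sum_of_subset_of_nonneg ?_ fun w _ _ => mul_nonneg
      (Finset.prod_nonneg fun j _ => binomPMF_nonneg (hp j).1 (hp j).2 _)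
      (binomPMF_nonneg hp0l hp0r _)
    intro w hw
    rw [Finset.mem_filter] at hw ⊢
    exact ⟨hw.1, hw.2 j₀ hij⟩
  -- Step 2: marginalize
  rw [marg k n m p p₀ j₀ (fun z => δ < LS j₀ z)] at h1
  -- Step 3: compare with the complement of the coverage event
  have h3 : prob (n j₀) m (p j₀) p₀
      ((sampleSpace (n j₀) m).filter (fun z => δ < LS j₀ z))
      ≤ prob (n j₀) m (p j₀) p₀
      ((sampleSpace (n j₀) m).filter (fun z => ¬ (LS j₀ z ≤ p j₀ - p₀))) := by
    refine prob_mono hpl hpr hp0l hp0r ?_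
    intro z hz
    rw [Finset.mem_filter] at hz ⊢
    exact ⟨hz.1, by push_neg; linarith [hz.2]⟩
  -- Step 4: complement rule
  have h4 : prob (n j₀) m (p j₀) p₀
        ((sampleSpace (n j₀) m).filter (fun z => LS j₀ z ≤ p j₀ - p₀))
      + prob (n j₀) m (p j₀) p₀
        ((sampleSpace (n j₀) m).filter (fun z => ¬ (LS j₀ z ≤ p j₀ - p₀))) = 1 := by
    unfold prob
    rw [Finset.sum_filter_add_sum_filter_not]
    exact prob_sampleSpace (n j₀) m (p j₀) p₀
  have h5 := hcov j₀ (p j₀) ⟨hpl, hpr⟩ p₀ ⟨hp0l, hp0r⟩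
  linarith
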